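/- Let f : [0,∞) → ℝ satisfy (H1), let λ, μ > 0, and suppose there exists a₀ > 0 such that f(x) ≠ 0 for all x ≥ a₀. If ∫_{a₀}^∞ 1/|f(x)| dx < ∞, then the series S = Σ_{n≥1} (1/π_n) Σ_{k≥n+1} π_k/λ_k is finite. -/

import Mathlib

open MeasureTheory Set

private lemma tsum_shift_le (g : ℕ → ENNReal) (K : ℕ) :
    ∑' j, g j ≤ ∑ j ∈ Finset.range K, g j + ∑' j, g (j + K) := by
  refine Summable.tsum_le_of_sum_le ENNReal.summable fun s => ?_
  rw [← Finset.sum_filter_add_sum_filter_not s (· < K)]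
  refine add_le_add ?_ ?_
  · refine le_trans (Finset.sum_le_sum_of_subset ?_) le_rfl
    intro i hi
    simp only [Finset.mem_filter, Finset.mem_range] at hi ⊢
    exact hi.2
  · have h1 : ∑ j ∈ s.filter (fun j => ¬ j < K), g j
        = ∑ i ∈ (s.filter (fun j => ¬ j < K)).image (· - K), g (i + K) := by
      rw [Finset.sum_image]
      · refine Finset.sum_congr rfl fun j hj => ?_
        simp only [Finset.mem_filter, not_lt] at hj
        congr 1; omega
      · intro x hx y hy hxy
        simp only [Finset.coe_filter, Finset.mem_coe, Finset.mem_filter, Set.mem_setOf_eq, not_lt] at hx hy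
        simp only at hxy
        omega
    rw [h1]
    exact ENNReal.sum_le_tsum _

private lemma pow_half_tsum : ∑' k : ℕ, ENNReal.ofReal ((1/2 : ℝ) ^ k) = 2 := by
  have h : ∀ k : ℕ, ENNReal.ofReal ((1/2 : ℝ) ^ k) = (2⁻¹ : ENNReal) ^ k := by
    intro k
    rw [ENNReal.ofReal_pow (by norm_num)]
    congr 1
    rw [one_div, ENNReal.ofReal_inv_of_pos (by norm_num : (0:ℝ) < 2)]
    norm_num
  simp only [h]
  rw [ENNReal.tsum_geometric, ← ENNReal.one_sub_inv_two, ENNReal.sub_sub_cancel ENNReal.one_ne_top (by exact ENNReal.inv_le_one.mpr one_le_two)]; simp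

private lemma auxIb (f : ℝ → ℝ) (a₀ : ℝ) (ha₀ : 0 < a₀)
    (hf_cont : ContinuousOn f (Ici 0)) :
    ∀ (m₀ : ℕ) (b : ℕ → ℝ), a₀ ≤ (m₀:ℝ) →
    (∀ (j : ℕ) (x : ℝ), (m₀ + j : ℝ) ≤ x → x < (m₀ + j : ℝ) + 1 →
       ENNReal.ofReal (1 / b j) ≤ ENNReal.ofReal (1 / |f x|)) →
    (∑' j : ℕ, ENNReal.ofReal (1 / b j)) ≤ ∫⁻ x in Ici a₀, ENNReal.ofReal (1 / |f x|) := by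
  intro m₀ b hm₀ hbd
  refine Summable.tsum_le_of_sum_le ENNReal.summable fun s => ?_
  have hsub0 : ∀ j : ℕ, Ico ((m₀:ℝ) + j) ((m₀ + j : ℝ) + 1) ⊆ Ici a₀ := by
    intro j x hx
    rcases hx with ⟨h1, _⟩
    have : (0:ℝ) ≤ j := Nat.cast_nonneg j
    simp only [mem_Ici]
    linarith
  -- per-interval bound
  have hper : ∀ j : ℕ, ENNReal.ofReal (1 / b j)
      ≤ ∫⁻ x in Ico ((m₀:ℝ) + j) ((m₀ + j : ℝ) + 1), ENNReal.ofReal (1 / |f x|) := by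
    intro j
    have hvol : (volume (Ico ((m₀:ℝ) + j) ((m₀ + j : ℝ) + 1))) = 1 := by
      rw [Real.volume_Ico]; simp
    have hconst : ENNReal.ofReal (1 / b j)
        = ∫⁻ _ in Ico ((m₀:ℝ) + j) ((m₀ + j : ℝ) + 1), ENNReal.ofReal (1 / b j) := by
      rw [setLIntegral_const, hvol, mul_one]
    rw [hconst]
    have hmeas : AEMeasurable (fun x => ENNReal.ofReal (1 / |f x|))
        (volume.restrict (Ico ((m₀:ℝ) + j) ((m₀ + j : ℝ) + 1))) := by
      have hsub : Ico ((m₀:ℝ) + j) ((m₀ + j : ℝ) + 1) ⊆ Ici (0:ℝ) := by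
        intro x hx
        have := hsub0 j hx
        simp only [mem_Ici] at this ⊢
        linarith
      have h1 : AEMeasurable f (volume.restrict (Ico ((m₀:ℝ) + j) ((m₀ + j : ℝ) + 1))) :=
        (hf_cont.mono hsub).aemeasurable measurableSet_Ico
      have h2 : AEMeasurable (fun x => ENNReal.ofReal (‖f x‖⁻¹))
          (volume.restrict (Ico ((m₀:ℝ) + j) ((m₀ + j : ℝ) + 1))) :=
        ENNReal.measurable_ofReal.comp_aemeasurable h1.norm.inv
      refine h2.congr ?_
      filter_upwards with x
      simp [one_div, Real.norm_eq_abs]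
    refine setLIntegral_mono_ae hmeas ?_
    filter_upwards with x hx
    exact hbd j x hx.1 hx.2
  calc ∑ j ∈ s, ENNReal.ofReal (1 / b j)
      ≤ ∑ j ∈ s, ∫⁻ x in Ico ((m₀:ℝ) + j) ((m₀ + j : ℝ) + 1), ENNReal.ofReal (1 / |f x|) :=
        Finset.sum_le_sum fun j _ => hper j
    _ = ∫⁻ x in ⋃ j ∈ s, Ico ((m₀:ℝ) + j) ((m₀ + j : ℝ) + 1), ENNReal.ofReal (1 / |f x|) := by
        refine (lintegral_biUnion_finset ?_ (fun j _ => measurableSet_Ico) _).symm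
        intro i _ j _ hij
        refine Set.disjoint_left.mpr fun x hx1 hx2 => hij ?_
        rcases hx1 with ⟨ha, hb⟩
        rcases hx2 with ⟨hc, hd⟩
        have : (i:ℝ) = j := by
          by_contra hne
          rcases lt_or_gt_of_ne hne with h | h
          · have : (i:ℝ) + 1 ≤ j := by exact_mod_cast (by exact_mod_cast Nat.succ_le_of_lt (by exact_mod_cast h) : (i+1:ℕ) ≤ j)
            linarith
          · have : (j:ℝ) + 1 ≤ i := by exact_mod_cast (by exact_mod_cast Nat.succ_le_of_lt (by exact_mod_cast h) : (j+1:ℕ) ≤ i)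
            linarith
        exact_mod_cast this
    _ ≤ ∫⁻ x in Ici a₀, ENNReal.ofReal (1 / |f x|) := by
        refine lintegral_mono_set ?_
        refine Set.iUnion₂_subset fun j _ => hsub0 j

private lemma auxNeg (f : ℝ → ℝ) (θ : ℝ) (hθ : 0 ≤ θ) (a₀ : ℝ) (ha₀ : 0 < a₀)
    (hf_cont : ContinuousOn f (Ici 0))
    (hfne : ∀ x ≥ a₀, f x ≠ 0)
    (hfle : ∀ x : ℝ, 0 ≤ x → f x ≤ θ * x)
    (hIb : ∀ (m₀ : ℕ) (b : ℕ → ℝ), a₀ ≤ (m₀:ℝ) →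
      (∀ (j : ℕ) (x : ℝ), (m₀ + j : ℝ) ≤ x → x < (m₀ + j : ℝ) + 1 →
         ENNReal.ofReal (1 / b j) ≤ ENNReal.ofReal (1 / |f x|)) →
      (∑' j : ℕ, ENNReal.ofReal (1 / b j)) ≤ ∫⁻ x in Ici a₀, ENNReal.ofReal (1 / |f x|))
    (hint : (∫⁻ x in Ici a₀, ENNReal.ofReal (1 / |f x|)) < ⊤) :
    ∀ x : ℝ, a₀ ≤ x → f x < 0 := by
  by_contra hcon
  push_neg at hcon
  obtain ⟨x₀, hx₀, hfx₀⟩ := hcon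
  have hx₀pos : 0 < f x₀ := lt_of_le_of_ne hfx₀ (Ne.symm (hfne x₀ hx₀))
  -- f is positive on [x₀, ∞)
  have hpos : ∀ y : ℝ, x₀ ≤ y → 0 < f y := by
    intro y hy
    rcases eq_or_lt_of_le hy with rfl | hlt
    · exact hx₀pos
    by_contra hneg
    push_neg at hneg
    have hyneg : f y < 0 := lt_of_le_of_ne hneg (hfne y (le_trans hx₀ hy))
    have hcont' : ContinuousOn f (Icc x₀ y) := by
      refine hf_cont.mono fun z hz => ?_
      rcases hz with ⟨h1, _⟩
      simp only [mem_Ici]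
      linarith
    have h0 : (0:ℝ) ∈ Icc (f y) (f x₀) := ⟨le_of_lt hyneg, le_of_lt hx₀pos⟩
    obtain ⟨z, hz, hfz⟩ := intermediate_value_Icc' hy hcont' h0
    exact hfne z (le_trans hx₀ hz.1) hfz
  -- θ must be positive
  rcases eq_or_lt_of_le hθ with rfl | hθpos
  · have := hfle x₀ (le_of_lt (lt_of_lt_of_le ha₀ hx₀))
    simp at this
    linarith
  -- harmonic-type divergence
  set m₀ : ℕ := ⌈max x₀ a₀⌉₊ + 1 with hm₀def
  have hm₀a : a₀ ≤ (m₀:ℝ) := by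
    have h1 : max x₀ a₀ ≤ (⌈max x₀ a₀⌉₊ : ℝ) := Nat.le_ceil _
    have : ((⌈max x₀ a₀⌉₊ : ℕ):ℝ) ≤ (m₀:ℝ) := by exact_mod_cast Nat.le_succ _
    calc a₀ ≤ max x₀ a₀ := le_max_right _ _
      _ ≤ _ := h1
      _ ≤ _ := this
  have hm₀x : x₀ ≤ (m₀:ℝ) := by
    have h1 : max x₀ a₀ ≤ (⌈max x₀ a₀⌉₊ : ℝ) := Nat.le_ceil _
    have : ((⌈max x₀ a₀⌉₊ : ℕ):ℝ) ≤ (m₀:ℝ) := by exact_mod_cast Nat.le_succ _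
    calc x₀ ≤ max x₀ a₀ := le_max_left _ _
      _ ≤ _ := h1
      _ ≤ _ := this
  have hblock := hIb m₀ (fun j => θ * ((m₀:ℝ) + j + 1)) hm₀a (by
    intro j x hx1 hx2
    have hxx₀ : x₀ ≤ x := by
      have : (0:ℝ) ≤ j := Nat.cast_nonneg j
      linarith
    have hfxpos : 0 < f x := hpos x hxx₀
    have habs : |f x| = f x := abs_of_pos hfxpos
    refine ENNReal.ofReal_le_ofReal ?_
    rw [habs]
    refine one_div_le_one_div_of_le hfxpos ?_
    calc f x ≤ θ * x := hfle x (by linarith)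
      _ ≤ θ * ((m₀:ℝ) + j + 1) := by nlinarith
    )
  -- but the series diverges
  have hdiv : (∑' j : ℕ, ENNReal.ofReal (1 / (θ * ((m₀:ℝ) + j + 1)))) = ⊤ := by
    by_contra htop
    have hsum := ENNReal.summable_toReal htop
    have heq : ∀ j : ℕ, (ENNReal.ofReal (1 / (θ * ((m₀:ℝ) + j + 1)))).toReal
        = 1 / (θ * ((m₀:ℝ) + j + 1)) := by
      intro j
      refine ENNReal.toReal_ofReal ?_
      have : (0:ℝ) ≤ j := Nat.cast_nonneg j
      positivity
    rw [funext heq] at hsum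
    have hsum2 : Summable (fun j : ℕ => θ * (1 / (θ * ((m₀:ℝ) + j + 1)))) := hsum.mul_left θ
    have heq2 : ∀ j : ℕ, θ * (1 / (θ * ((m₀:ℝ) + j + 1))) = 1 / ((j + (m₀ + 1) : ℕ) : ℝ) := by
      intro j
      push_cast
      rw [eq_div_iff (by positivity)]
      field_simp
      ring
    rw [funext heq2] at hsum2
    have hsum3 : Summable (fun n : ℕ => 1 / (n:ℝ)) := (summable_nat_add_iff (m₀ + 1)).mp hsum2
    exact Real.not_summable_one_div_natCast hsum3
  rw [hdiv] at hblock
  exact absurd (lt_of_le_of_lt hblock hint) (lt_irrefl ⊤)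

private lemma auxM (f : ℝ → ℝ) (θ : ℝ) (hθ : 0 ≤ θ) (a₀ : ℝ) (ha₀ : 0 < a₀)
    (c : ℝ) (hc : 0 < c)
    (hneg : ∀ x : ℝ, a₀ ≤ x → f x < 0)
    (hstep : ∀ s t : ℝ, 0 ≤ s → s ≤ t → f t - f s ≤ θ * (t - s))
    (hIb : ∀ (m₀ : ℕ) (b : ℕ → ℝ), a₀ ≤ (m₀:ℝ) →
      (∀ (j : ℕ) (x : ℝ), (m₀ + j : ℝ) ≤ x → x < (m₀ + j : ℝ) + 1 →
         ENNReal.ofReal (1 / b j) ≤ ENNReal.ofReal (1 / |f x|)) →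
      (∑' j : ℕ, ENNReal.ofReal (1 / b j)) ≤ ∫⁻ x in Ici a₀, ENNReal.ofReal (1 / |f x|))
    (hint : (∫⁻ x in Ici a₀, ENNReal.ofReal (1 / |f x|)) < ⊤) :
    ∃ M : ℕ, 2 ≤ M ∧ a₀ + 1 ≤ (M:ℝ) ∧ (∀ m : ℕ, M ≤ m → 2*c*m ≤ -f m) ∧
      (∑' j : ℕ, ENNReal.ofReal (1 / (-f ((M + j : ℕ):ℝ) + θ))) ≤
        ∫⁻ x in Ici a₀, ENNReal.ofReal (1 / |f x|) := by
  classical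
  set n₁ : ℕ := ⌈a₀⌉₊ + 1 with hn₁def
  have hn₁a : a₀ ≤ (n₁:ℝ) := by
    have h1 : a₀ ≤ (⌈a₀⌉₊ : ℝ) := Nat.le_ceil _
    have h2 : ((⌈a₀⌉₊ : ℕ):ℝ) ≤ (n₁:ℝ) := by exact_mod_cast Nat.le_succ _
    linarith
  have hcast : ∀ i : ℕ, n₁ ≤ i → a₀ ≤ (i:ℝ) := by
    intro i hi
    have : (n₁:ℝ) ≤ (i:ℝ) := by exact_mod_cast hi
    linarith
  -- the tail bound applies for any starting point N ≥ n₁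
  have hIball : ∀ N : ℕ, n₁ ≤ N →
      (∑' j : ℕ, ENNReal.ofReal (1 / (-f ((N + 1 + j : ℕ):ℝ) + θ))) ≤
        ∫⁻ x in Ici a₀, ENNReal.ofReal (1 / |f x|) := by
    intro N hN
    refine hIb N (fun j => -f ((N + 1 + j : ℕ):ℝ) + θ) (hcast N hN) ?_
    intro j x hx1 hx2
    have hxa : a₀ ≤ x := by
      have h0 : a₀ ≤ (N:ℝ) := hcast N hN
      have : (0:ℝ) ≤ j := Nat.cast_nonneg j
      linarith
    have hfx : f x < 0 := hneg x hxa
    have habs : |f x| = -f x := abs_of_neg hfx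
    have hcastN : ((N + 1 + j : ℕ):ℝ) = (N:ℝ) + j + 1 := by push_cast; ring
    have hfi : f ((N + 1 + j : ℕ):ℝ) < 0 := by
      rw [hcastN]
      refine hneg _ ?_
      have h0 : a₀ ≤ (N:ℝ) := hcast N hN
      have : (0:ℝ) ≤ j := Nat.cast_nonneg j
      linarith
    have hkey : -f x ≤ -f ((N + 1 + j : ℕ):ℝ) + θ := by
      have h1 := hstep x ((N + 1 + j : ℕ):ℝ) (by linarith) (by rw [hcastN]; linarith)
      have h2 : θ * (((N + 1 + j : ℕ):ℝ) - x) ≤ θ := by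
        rw [hcastN]
        nlinarith
      linarith
    rw [habs]
    refine ENNReal.ofReal_le_ofReal (one_div_le_one_div_of_le (by linarith) hkey)
  have hA := hIball n₁ le_rfl
  -- tail goes to zero
  set δ₀ : ℝ := 1 / (4 * (c + θ)) with hδ₀def
  have hδ₀pos : 0 < δ₀ := by positivity
  have htendsto := ENNReal.tendsto_sum_nat_add
    (fun j => ENNReal.ofReal (1 / (-f ((n₁ + 1 + j : ℕ):ℝ) + θ)))
    (ne_top_of_le_ne_top hint.ne hA)
  have hev := htendsto.eventually_lt_const (ENNReal.ofReal_pos.mpr hδ₀pos)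
  obtain ⟨J, hJ⟩ := hev.exists
  set base : ℕ := n₁ + 1 + J with hbasedef
  set M : ℕ := 2 * base + 2 with hMdef
  have hbase_n₁ : n₁ ≤ base := by omega
  refine ⟨M, by omega, ?_, ?_, ?_⟩
  · have h1 : a₀ ≤ (n₁:ℝ) := hn₁a
    have h2 : (n₁:ℝ) + 1 ≤ (M:ℝ) := by exact_mod_cast (by omega : n₁ + 1 ≤ M)
    linarith
  · -- main goodness claim
    intro m hm
    by_contra hbad
    push_neg at hbad
    have hm2 : 2 * base + 2 ≤ m := hm
    have hhalf_ge : base + 1 ≤ m / 2 := by omega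
    have hblock_le : (∑ j ∈ Finset.Icc (m/2 - base) (m - base),
        ENNReal.ofReal (1 / (-f ((n₁ + 1 + (j + J) : ℕ):ℝ) + θ)))
        ≤ ∑' j : ℕ, ENNReal.ofReal (1 / (-f ((n₁ + 1 + (j + J) : ℕ):ℝ) + θ)) :=
      ENNReal.sum_le_tsum _
    have hmpos : 0 < (m:ℝ) := by
      have : (0:ℕ) < m := by omega
      exact_mod_cast this
    have hterm_ge : ∀ j ∈ Finset.Icc (m/2 - base) (m - base),
        ENNReal.ofReal (1 / ((2*c + 2*θ) * m))
          ≤ ENNReal.ofReal (1 / (-f ((n₁ + 1 + (j + J) : ℕ):ℝ) + θ)) := by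
      intro j hj
      rw [Finset.mem_Icc] at hj
      set i : ℕ := n₁ + 1 + (j + J) with hidef
      have hieq : i = base + j := by omega
      have hi_lb : m / 2 ≤ i := by omega
      have hi_ub : i ≤ m := by omega
      have hia₀ : a₀ ≤ (i:ℝ) := hcast i (by omega)
      have hima₀ : a₀ ≤ (m:ℝ) := hcast m (by omega)
      have hfi : f (i:ℝ) < 0 := hneg _ hia₀
      have hfm : f (m:ℝ) < 0 := hneg _ hima₀
      have hcastim : (i:ℝ) ≤ (m:ℝ) := by exact_mod_cast hi_ub
      have h1 := hstep (i:ℝ) (m:ℝ) (by linarith) hcastim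
      have hmi : (m:ℝ) - i ≤ m := by
        have : (0:ℝ) ≤ i := Nat.cast_nonneg i
        linarith
      have hub : -f (i:ℝ) + θ ≤ (2*c + 2*θ) * m := by
        have hm1 : (1:ℝ) ≤ (m:ℝ) := by exact_mod_cast (by omega : 1 ≤ m)
        nlinarith [hbad, h1]
      exact ENNReal.ofReal_le_ofReal (one_div_le_one_div_of_le (by linarith) hub)
    have hcard : (Finset.Icc (m/2 - base) (m - base)).card = m - m/2 + 1 := by
      rw [Nat.card_Icc]; omega
    have hblock_ge : ENNReal.ofReal δ₀ ≤ (∑ j ∈ Finset.Icc (m/2 - base) (m - base),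
        ENNReal.ofReal (1 / (-f ((n₁ + 1 + (j + J) : ℕ):ℝ) + θ))) := by
      have h1 := Finset.card_nsmul_le_sum (Finset.Icc (m/2 - base) (m - base))
        (fun j => ENNReal.ofReal (1 / (-f ((n₁ + 1 + (j + J) : ℕ):ℝ) + θ)))
        (ENNReal.ofReal (1 / ((2*c + 2*θ) * m))) hterm_ge
      refine le_trans ?_ h1
      rw [hcard, nsmul_eq_mul]
      have h2 : ((m - m/2 + 1 : ℕ) : ENNReal) = ENNReal.ofReal ((m - m/2 + 1 : ℕ):ℝ) := by
        rw [ENNReal.ofReal_natCast]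
      rw [h2, ← ENNReal.ofReal_mul (by positivity)]
      refine ENNReal.ofReal_le_ofReal ?_
      have hcard_ge : (m:ℝ)/2 ≤ ((m - m/2 + 1 : ℕ):ℝ) := by
        have h3 : ((m/2 : ℕ):ℝ) ≤ (m:ℝ)/2 := by
          calc ((m/2 : ℕ):ℝ) ≤ (m:ℝ)/(2:ℕ) := Nat.cast_div_le
            _ = (m:ℝ)/2 := by norm_num
        have h4 : ((m - m/2 + 1 : ℕ):ℝ) = (m:ℝ) - ((m/2:ℕ):ℝ) + 1 := by
          have : m/2 ≤ m := by omega
          push_cast [this]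
          ring
        rw [h4]
        linarith
      calc δ₀ = ((m:ℝ)/2) * (1 / ((2*c + 2*θ) * m)) := by
            rw [hδ₀def]
            field_simp
            ring
        _ ≤ ((m - m/2 + 1 : ℕ):ℝ) * (1 / ((2*c + 2*θ) * m)) := by
            refine mul_le_mul_of_nonneg_right hcard_ge (by positivity)
    have := lt_of_le_of_lt (le_trans hblock_ge hblock_le) hJ
    exact absurd this (lt_irrefl _)
  · -- final tail sum bound: starting from M
    have := hIball (M - 1) (by omega)
    have hMM : M - 1 + 1 = M := by omega
    rw [hMM] at this
    exact this

private lemma auxP (lamn mun : ℕ → ℝ) (P : ℕ → ℝ)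
    (hlam_pos : ∀ n : ℕ, 1 ≤ n → 0 < lamn n)
    (hmun_pos : ∀ n : ℕ, 1 ≤ n → 0 < mun n)
    (hP1 : P 1 = 1)
    (hPn : ∀ n : ℕ, 2 ≤ n →
      P n = (∏ i ∈ Finset.Icc 1 n, lamn i) / (∏ i ∈ Finset.Icc 2 n, mun i)) :
    (∀ m, 2 ≤ m → P m = lamn 1 * ∏ i ∈ Finset.Ioc 1 m, (lamn i / mun i)) ∧
    (∀ m, 1 ≤ m → 0 < P m) ∧
    (∀ n k : ℕ, 1/(P (n+1)) * (P (n+2+k)/lamn (n+2+k)) ≤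
      (max 1 (lamn 1)) * ((∏ i ∈ Finset.Ioc (n+1) (n+2+k), (lamn i / mun i)) / lamn (n+2+k))) := by
  have hprod_pos : ∀ s t : ℕ, 1 ≤ s → 0 < ∏ i ∈ Finset.Ioc s t, (lamn i / mun i) := by
    intro s t hs
    refine Finset.prod_pos fun i hi => ?_
    rw [Finset.mem_Ioc] at hi
    exact div_pos (hlam_pos i (by omega)) (hmun_pos i (by omega))
  have hPprod : ∀ m, 2 ≤ m → P m = lamn 1 * ∏ i ∈ Finset.Ioc 1 m, (lamn i / mun i) := by
    intro m hm
    rw [hPn m hm]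
    have h1 : Finset.Icc 1 m = insert 1 (Finset.Ioc 1 m) := by
      ext x
      simp only [Finset.mem_Icc, Finset.mem_insert, Finset.mem_Ioc]
      omega
    have h2 : (1:ℕ) ∉ Finset.Ioc 1 m := by simp
    have h3 : Finset.Icc 2 m = Finset.Ioc 1 m := Finset.Icc_add_one_left_eq_Ioc 1 m
    rw [h1, Finset.prod_insert h2, h3, Finset.prod_div_distrib, mul_div_assoc]
  have hPpos : ∀ m, 1 ≤ m → 0 < P m := by
    intro m hm
    rcases eq_or_lt_of_le hm with h | h
    · rw [← h, hP1]; norm_num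
    · rw [hPprod m h]
      exact mul_pos (hlam_pos 1 le_rfl) (hprod_pos 1 m le_rfl)
  refine ⟨hPprod, hPpos, ?_⟩
  intro n k
  have hm2 : 2 ≤ n + 2 + k := by omega
  have hlpos := hlam_pos (n+2+k) (by omega)
  rcases Nat.eq_zero_or_pos n with rfl | hn
  · -- n = 0 : P 1 = 1
    simp only [zero_add, hP1]
    rw [hPprod (2+k) (by omega)]
    have : (1:ℝ)/1 = 1 := by norm_num
    rw [this, one_mul, mul_div_assoc]
    refine mul_le_mul_of_nonneg_right (le_max_right _ _) ?_
    have := hprod_pos 1 (2+k) le_rfl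
    positivity
  · -- n ≥ 1
    have hsplit : (∏ i ∈ Finset.Ioc 1 (n+1), (lamn i / mun i)) *
        (∏ i ∈ Finset.Ioc (n+1) (n+2+k), (lamn i / mun i))
        = ∏ i ∈ Finset.Ioc 1 (n+2+k), (lamn i / mun i) :=
      Finset.prod_Ioc_consecutive _ (by omega) (by omega)
    rw [hPprod (n+2+k) hm2, hPprod (n+1) (by omega), ← hsplit]
    have hl1 := hlam_pos 1 le_rfl
    have hp1 := hprod_pos 1 (n+1) le_rfl
    have hp2 := hprod_pos (n+1) (n+2+k) (by omega)
    have hgen : ∀ (A B L1 L : ℝ), A ≠ 0 → L1 ≠ 0 → L ≠ 0 →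
        1/(L1*A) * ((L1*(A*B))/L) = B / L := by
      intros A B L1 L hA hL1 hL
      field_simp
    have hid := hgen (∏ i ∈ Finset.Ioc 1 (n+1), (lamn i / mun i))
      (∏ i ∈ Finset.Ioc (n+1) (n+2+k), (lamn i / mun i)) (lamn 1) (lamn (n+2+k))
      (ne_of_gt hp1) (ne_of_gt hl1) (ne_of_gt hlpos)
    rw [hid]
    have hrhs : (∏ i ∈ Finset.Ioc (n+1) (n+2+k), (lamn i / mun i)) / lamn (n+2+k)
        ≤ max 1 (lamn 1) * ((∏ i ∈ Finset.Ioc (n+1) (n+2+k), (lamn i / mun i)) / lamn (n+2+k)) := by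
      nlinarith [le_max_left (1:ℝ) (lamn 1), div_pos hp2 hlpos]
    exact hrhs

private lemma auxProd (f : ℝ → ℝ) (θ lam mu c : ℝ) (hθ : 0 ≤ θ) (hlam : 0 < lam) (hmu : 0 < mu)
    (hcdef : c = lam + θ)
    (lamn mun : ℕ → ℝ) (M : ℕ) (hM2 : 2 ≤ M)
    (hlam_pos : ∀ n : ℕ, 1 ≤ n → 0 < lamn n)
    (hmun_pos : ∀ n : ℕ, 1 ≤ n → 0 < mun n)
    (hlam_lb : ∀ n : ℕ, lam * n ≤ lamn n)
    (hlam_ub : ∀ n : ℕ, lamn n ≤ c * n)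
    (hmun_ge : ∀ n : ℕ, mu * n + (- f n) ≤ mun n)
    (hgood : ∀ m : ℕ, M ≤ m → 2*c*(m:ℝ) ≤ -f m) :
    (∀ m : ℕ, M ≤ m → -f (m:ℝ) + θ ≤ 2 * mun m) ∧
    (∀ m : ℕ, M ≤ m → lamn m / mun m ≤ 1/2) ∧
    (∀ n k : ℕ, n+2+k < M →
      (∏ i ∈ Finset.Ioc (n+1) (n+2+k), (lamn i / mun i)) / lamn (n+2+k)
        ≤ (∏ i ∈ Finset.Ioc 1 M, max 1 (lamn i / mun i)) * (1/lam)) ∧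
    (∀ n k : ℕ, M ≤ n+2+k →
      (∏ i ∈ Finset.Ioc (n+1) (n+2+k), (lamn i / mun i)) / lamn (n+2+k)
        ≤ (∏ i ∈ Finset.Ioc 1 M, max 1 (lamn i / mun i)) * 2^M * (1/2)^k
            * (2 / (-f (↑(n+2+k)) + θ))) := by
  have hc : 0 < c := by rw [hcdef]; linarith
  have hρ_nonneg : ∀ i : ℕ, 1 ≤ i → 0 ≤ lamn i / mun i := fun i hi =>
    le_of_lt (div_pos (hlam_pos i hi) (hmun_pos i hi))
  set B := ∏ i ∈ Finset.Ioc 1 M, max 1 (lamn i / mun i) with hBdef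
  have hB1 : 1 ≤ B := by
    have := Finset.prod_le_prod (s := Finset.Ioc 1 M) (f := fun _ => (1:ℝ))
      (g := fun i => max 1 (lamn i / mun i)) (fun i _ => by norm_num)
      (fun i _ => le_max_left _ _)
    rwa [Finset.prod_const_one] at this
  -- mun lower bounds for good m
  have hmun_ge_f : ∀ m : ℕ, M ≤ m → -f (m:ℝ) ≤ mun m := by
    intro m hm
    have h1 := hmun_ge m
    have : (0:ℝ) ≤ mu * m := by positivity
    linarith
  have hfθ : ∀ m : ℕ, M ≤ m → θ ≤ -f (m:ℝ) := by
    intro m hm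
    have h1 := hgood m hm
    have hm1 : (1:ℝ) ≤ (m:ℝ) := by exact_mod_cast (by omega : 1 ≤ m)
    nlinarith [hcdef]
  have hinvmun : ∀ m : ℕ, M ≤ m → -f (m:ℝ) + θ ≤ 2 * mun m := by
    intro m hm
    have := hmun_ge_f m hm
    have := hfθ m hm
    linarith
  have hhalf : ∀ m : ℕ, M ≤ m → lamn m / mun m ≤ 1/2 := by
    intro m hm
    have hmpos := hmun_pos m (by omega)
    rw [div_le_iff₀ hmpos]
    have h1 := hlam_ub m
    have h2 := hgood m hm
    have h3 := hmun_ge_f m hm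
    linarith
  have hmax_nonneg : ∀ i : ℕ, (0:ℝ) ≤ max 1 (lamn i / mun i) :=
    fun i => le_trans (by norm_num) (le_max_left _ _)
  have hsubset_le : ∀ (u v : Finset ℕ), u ⊆ v →
      (∏ i ∈ u, max 1 (lamn i / mun i)) ≤ ∏ i ∈ v, max 1 (lamn i / mun i) := by
    intro u v huv
    rw [← Finset.prod_sdiff huv]
    have h1 : (1:ℝ) ≤ ∏ i ∈ v \ u, max 1 (lamn i / mun i) := by
      have := Finset.prod_le_prod (s := v \ u) (f := fun _ => (1:ℝ))
        (g := fun i => max 1 (lamn i / mun i)) (fun i _ => by norm_num)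
        (fun i _ => le_max_left _ _)
      rwa [Finset.prod_const_one] at this
    have h2 : (0:ℝ) ≤ ∏ i ∈ u, max 1 (lamn i / mun i) :=
      Finset.prod_nonneg fun i _ => hmax_nonneg i
    exact le_mul_of_one_le_left h2 h1
  -- prod over subinterval of [1,M] is ≤ B
  have hprodB : ∀ s t : ℕ, 1 ≤ s → t ≤ M →
      (∏ i ∈ Finset.Ioc s t, (lamn i / mun i)) ≤ B := by
    intro s t hs ht
    calc (∏ i ∈ Finset.Ioc s t, (lamn i / mun i))
        ≤ ∏ i ∈ Finset.Ioc s t, max 1 (lamn i / mun i) := by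
          refine Finset.prod_le_prod (fun i hi => ?_) (fun i hi => le_max_right _ _)
          rw [Finset.mem_Ioc] at hi
          exact hρ_nonneg i (by omega)
      _ ≤ B := by
          refine hsubset_le _ _ ?_
          intro i hi
          rw [Finset.mem_Ioc] at hi ⊢
          omega
  constructor
  · exact hinvmun
  constructor
  · exact hhalf
  constructor
  · -- case m < M
    intro n k hmM
    have hl := hlam_pos (n+2+k) (by omega)
    have hprod := hprodB (n+1) (n+2+k) (by omega) (by omega)
    have hprod_nonneg : 0 ≤ ∏ i ∈ Finset.Ioc (n+1) (n+2+k), (lamn i / mun i) :=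
      Finset.prod_nonneg fun i hi => by
        rw [Finset.mem_Ioc] at hi
        exact hρ_nonneg i (by omega)
    have hinv : 1 / lamn (n+2+k) ≤ 1 / lam := by
      refine one_div_le_one_div_of_le hlam ?_
      calc lam = lam * 1 := by ring
        _ ≤ lam * (↑(n+2+k)) := by
            refine mul_le_mul_of_nonneg_left ?_ (le_of_lt hlam)
            exact_mod_cast (by omega : 1 ≤ n+2+k)
        _ ≤ lamn (n+2+k) := hlam_lb _
    calc (∏ i ∈ Finset.Ioc (n+1) (n+2+k), (lamn i / mun i)) / lamn (n+2+k)
        = (∏ i ∈ Finset.Ioc (n+1) (n+2+k), (lamn i / mun i)) * (1/lamn (n+2+k)) := by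
          ring
      _ ≤ B * (1/lam) := by
          refine mul_le_mul hprod hinv (by positivity) (by linarith)
  · -- case m ≥ M
    intro n k hM
    set m := n + 2 + k with hmdef
    set s := max (n+1) (M-1) with hsdef
    have hs1 : n+1 ≤ s := le_max_left _ _
    have hs2 : s ≤ m - 1 := by
      rw [hsdef]
      refine max_le (by omega) (by omega)
    have hsm : s ≤ m := by omega
    have hm1 : 1 ≤ m := by omega
    have hsplit : (∏ i ∈ Finset.Ioc (n+1) s, (lamn i / mun i)) *
        (∏ i ∈ Finset.Ioc s m, (lamn i / mun i))
        = ∏ i ∈ Finset.Ioc (n+1) m, (lamn i / mun i) :=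
      Finset.prod_Ioc_consecutive _ hs1 hsm
    -- first part ≤ B
    have hpart1 : (∏ i ∈ Finset.Ioc (n+1) s, (lamn i / mun i)) ≤ B := by
      calc (∏ i ∈ Finset.Ioc (n+1) s, (lamn i / mun i))
          ≤ ∏ i ∈ Finset.Ioc (n+1) s, max 1 (lamn i / mun i) := by
            refine Finset.prod_le_prod (fun i hi => ?_) (fun i hi => le_max_right _ _)
            rw [Finset.mem_Ioc] at hi
            exact hρ_nonneg i (by omega)
        _ ≤ B := by
            refine hsubset_le _ _ ?_
            intro i hi
            rw [Finset.mem_Ioc] at hi ⊢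
            rcases Nat.le_total (n+1) (M-1) with h | h
            · rw [hsdef, max_eq_right h] at hi
              omega
            · rw [hsdef, max_eq_left h] at hi
              omega
    -- second part: peel top
    have hm1eq : m - 1 + 1 = m := by omega
    have hpeel : (∏ i ∈ Finset.Ioc s m, (lamn i / mun i))
        = (∏ i ∈ Finset.Ioc s (m-1), (lamn i / mun i)) * (lamn m / mun m) := by
      conv_lhs => rw [← hm1eq]
      rw [Finset.prod_Ioc_succ_top hs2]
      rw [hm1eq]
    have hpart2 : (∏ i ∈ Finset.Ioc s (m-1), (lamn i / mun i)) ≤ (1/2)^(m - 1 - s) := by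
      have := Finset.prod_le_prod (s := Finset.Ioc s (m-1))
        (f := fun i => lamn i / mun i) (g := fun _ => (1/2:ℝ))
        (fun i hi => by
          rw [Finset.mem_Ioc] at hi
          exact hρ_nonneg i (by omega))
        (fun i hi => by
          rw [Finset.mem_Ioc] at hi
          refine hhalf i ?_
          omega)
      rwa [Finset.prod_const, Nat.card_Ioc] at this
    have hkM : k ≤ (m - 1 - s) + M := by
      rcases Nat.le_total (n+1) (M-1) with h | h
      · rw [hsdef, max_eq_right h]
        omega
      · rw [hsdef, max_eq_left h]
        omega
    have hpow : ((1:ℝ)/2)^(m - 1 - s) ≤ 2^M * (1/2)^k := by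
      have h1 : ((1:ℝ)/2)^(m - 1 - s + M) ≤ (1/2)^k :=
        pow_le_pow_of_le_one (by norm_num) (by norm_num) hkM
      have h2 : ((1:ℝ)/2)^(m - 1 - s) = 2^M * (1/2)^(m - 1 - s + M) := by
        rw [pow_add]
        field_simp
        rw [← mul_pow]; norm_num
      rw [h2]
      nlinarith [pow_pos (show (0:ℝ) < 2 by norm_num) M]
    -- combine
    have hlm := hlam_pos m (by omega)
    have hmm := hmun_pos m (by omega)
    have hfθm := hfθ m hM
    have hgm := hgood m hM
    have hm1' : (1:ℝ) ≤ (m:ℝ) := by exact_mod_cast hm1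
    have h2pos : 0 < -f (m:ℝ) + θ := by nlinarith
    have hinv2 : 1 / mun m ≤ 2 / (-f (m:ℝ) + θ) := by
      have h1 := hinvmun m hM
      rw [div_le_div_iff₀ hmm h2pos]
      linarith
    have hprod2_nonneg : 0 ≤ ∏ i ∈ Finset.Ioc s (m-1), (lamn i / mun i) :=
      Finset.prod_nonneg fun i hi => by
        rw [Finset.mem_Ioc] at hi
        exact hρ_nonneg i (by omega)
    have key : ∀ (A C L Mu : ℝ), L ≠ 0 → Mu ≠ 0 →
        (A * (C * (L/Mu)))/L = A * (C * (1/Mu)) := by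
      intro A C L Mu hL hMu
      field_simp
    have hstep1 : (∏ i ∈ Finset.Ioc (n+1) m, (lamn i / mun i)) / lamn m
        = (∏ i ∈ Finset.Ioc (n+1) s, (lamn i / mun i)) *
            ((∏ i ∈ Finset.Ioc s (m-1), (lamn i / mun i)) * (1 / mun m)) := by
      rw [← hsplit, hpeel]
      exact key _ _ _ _ (ne_of_gt hlm) (ne_of_gt hmm)
    rw [hstep1]
    have hmun_inv_nonneg : (0:ℝ) ≤ 1 / mun m := by positivity
    have hfrac_nonneg : (0:ℝ) ≤ 2 / (-f (m:ℝ) + θ) := by positivity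
    have hB0 : (0:ℝ) ≤ B := by linarith
    calc (∏ i ∈ Finset.Ioc (n+1) s, (lamn i / mun i)) *
            ((∏ i ∈ Finset.Ioc s (m-1), (lamn i / mun i)) * (1 / mun m))
        ≤ B * ((1/2)^(m-1-s) * (2 / (-f (m:ℝ) + θ))) := by
          refine mul_le_mul hpart1 ?_ ?_ hB0
          · exact mul_le_mul hpart2 hinv2 hmun_inv_nonneg (by positivity)
          · exact mul_nonneg hprod2_nonneg hmun_inv_nonneg
      _ ≤ B * ((2^M * (1/2)^k) * (2 / (-f (m:ℝ) + θ))) := by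
          refine mul_le_mul_of_nonneg_left ?_ hB0
          exact mul_le_mul_of_nonneg_right hpow hfrac_nonneg
      _ = B * 2^M * (1/2)^k * (2 / (-f (m:ℝ) + θ)) := by ring

private lemma auxFinal (f : ℝ → ℝ) (θ lam : ℝ) (hθ : 0 ≤ θ) (hlam : 0 < lam)
    (lamn mun : ℕ → ℝ) (P : ℕ → ℝ) (M : ℕ) (hM2 : 2 ≤ M)
    (hlam_pos : ∀ n : ℕ, 1 ≤ n → 0 < lamn n)
    (hPpos : ∀ m, 1 ≤ m → 0 < P m)
    (hX : ∀ n k : ℕ, 1/(P (n+1)) * (P (n+2+k)/lamn (n+2+k)) ≤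
      (max 1 (lamn 1)) * ((∏ i ∈ Finset.Ioc (n+1) (n+2+k), (lamn i / mun i)) / lamn (n+2+k)))
    (hprod_nonneg : ∀ n k : ℕ,
      0 ≤ (∏ i ∈ Finset.Ioc (n+1) (n+2+k), (lamn i / mun i)) / lamn (n+2+k))
    (hcase1 : ∀ n k : ℕ, n+2+k < M →
      (∏ i ∈ Finset.Ioc (n+1) (n+2+k), (lamn i / mun i)) / lamn (n+2+k)
        ≤ (∏ i ∈ Finset.Ioc 1 M, max 1 (lamn i / mun i)) * (1/lam))
    (hcase2 : ∀ n k : ℕ, M ≤ n+2+k →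
      (∏ i ∈ Finset.Ioc (n+1) (n+2+k), (lamn i / mun i)) / lamn (n+2+k)
        ≤ (∏ i ∈ Finset.Ioc 1 M, max 1 (lamn i / mun i)) * 2^M * (1/2)^k
            * (2 / (-f (↑(n+2+k)) + θ)))
    (hB1 : (1:ℝ) ≤ ∏ i ∈ Finset.Ioc 1 M, max 1 (lamn i / mun i))
    (I : ENNReal) (hI : I < ⊤)
    (hMtail : (∑' j : ℕ, ENNReal.ofReal (1 / (-f ((M + j : ℕ):ℝ) + θ))) ≤ I) :
    (∑' n : ℕ, ENNReal.ofReal (1 / P (n + 1)) *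
      ∑' k : ℕ, ENNReal.ofReal (P (n + 2 + k) / lamn (n + 2 + k))) < ⊤ := by
  classical
  set B : ℝ := ∏ i ∈ Finset.Ioc 1 M, max 1 (lamn i / mun i) with hBdef
  set E : ℝ := max 1 (lamn 1) with hEdef
  have hE1 : (1:ℝ) ≤ E := le_max_left _ _
  set Dr : ℝ := E * B * 2^M * (2 + 1/lam) with hDrdef
  have hE0 : (0:ℝ) ≤ E := le_trans zero_le_one hE1
  have hB0 : (0:ℝ) ≤ B := le_trans zero_le_one hB1
  have hDr_nonneg : 0 ≤ Dr := by
    rw [hDrdef]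
    have h1 : (0:ℝ) ≤ (2:ℝ)^M := by positivity
    have h2 : (0:ℝ) ≤ 2 + 1/lam := by positivity
    exact mul_nonneg (mul_nonneg (mul_nonneg hE0 hB0) h1) h2
  set D : ENNReal := ENNReal.ofReal Dr with hDdef
  set g : ℕ → ENNReal := fun j =>
    ENNReal.ofReal (1 / (-f ((j + 2 : ℕ):ℝ) + θ)) + (if j + 2 < M then 1 else 0) with hgdef
  -- master term bound
  have hTerm : ∀ n k : ℕ, ENNReal.ofReal (1 / P (n + 1)) *
      ENNReal.ofReal (P (n + 2 + k) / lamn (n + 2 + k))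
      ≤ D * ENNReal.ofReal ((1/2:ℝ)^k) * g (n+k) := by
    intro n k
    have hP1pos := hPpos (n+1) (by omega)
    have hmerge : ENNReal.ofReal (1 / P (n + 1)) *
        ENNReal.ofReal (P (n + 2 + k) / lamn (n + 2 + k))
        = ENNReal.ofReal (1 / P (n + 1) * (P (n + 2 + k) / lamn (n + 2 + k))) :=
      (ENNReal.ofReal_mul (by positivity)).symm
    rw [hmerge]
    rcases lt_or_ge (n+2+k) M with hm | hm
    · -- small case
      have hreal : 1 / P (n + 1) * (P (n + 2 + k) / lamn (n + 2 + k))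
          ≤ Dr * (1/2:ℝ)^k := by
        have h1 := le_trans (hX n k)
          (mul_le_mul_of_nonneg_left (hcase1 n k hm) (by linarith : (0:ℝ) ≤ E))
        have hkM : k ≤ M := by omega
        have h2 : ((1:ℝ)/2)^M ≤ (1/2)^k :=
          pow_le_pow_of_le_one (by norm_num) (by norm_num) hkM
        have h3 : (2:ℝ)^M * (1/2)^M = 1 := by
          rw [← mul_pow]; norm_num
        have h4 : E * (B * (1/lam)) ≤ Dr * (1/2)^k := by
          have h5 : Dr * (1/2)^M ≤ Dr * (1/2)^k :=
            mul_le_mul_of_nonneg_left h2 hDr_nonneg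
          refine le_trans ?_ h5
          have h6 : Dr * (1/2)^M = E * B * (2 + 1/lam) := by
            calc Dr * (1/2)^M = E * B * (2 + 1/lam) * (2^M * (1/2)^M) := by
                  rw [hDrdef]; ring
              _ = E * B * (2 + 1/lam) := by rw [h3, mul_one]
          rw [h6]
          have hEB : (0:ℝ) ≤ E * B := mul_nonneg hE0 hB0
          have h7 : (1:ℝ)/lam ≤ 2 + 1/lam := by linarith
          calc E * (B * (1/lam)) = (E * B) * (1/lam) := by ring
            _ ≤ (E * B) * (2 + 1/lam) := mul_le_mul_of_nonneg_left h7 hEB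
            _ = E * B * (2 + 1/lam) := by ring
        linarith [h1, h4]
      calc ENNReal.ofReal (1 / P (n + 1) * (P (n + 2 + k) / lamn (n + 2 + k)))
          ≤ ENNReal.ofReal (Dr * (1/2:ℝ)^k) := ENNReal.ofReal_le_ofReal hreal
        _ = D * ENNReal.ofReal ((1/2:ℝ)^k) := ENNReal.ofReal_mul hDr_nonneg
        _ = D * ENNReal.ofReal ((1/2:ℝ)^k) * 1 := by rw [mul_one]
        _ ≤ D * ENNReal.ofReal ((1/2:ℝ)^k) * g (n+k) := by
            refine mul_le_mul_right ?_ _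
            rw [hgdef]
            simp only
            rw [if_pos (by omega : n + k + 2 < M)]
            exact le_add_self
    · -- large case
      have hreal : 1 / P (n + 1) * (P (n + 2 + k) / lamn (n + 2 + k))
          ≤ Dr * ((1/2:ℝ)^k * (1 / (-f (↑(n+2+k)) + θ))) := by
        have h1 := le_trans (hX n k)
          (mul_le_mul_of_nonneg_left (hcase2 n k hm) (by linarith : (0:ℝ) ≤ E))
        have h2 : E * (B * 2^M * (1/2)^k * (2 / (-f (↑(n+2+k)) + θ)))
            = (E * B * 2^M * 2) * ((1/2)^k * (1 / (-f (↑(n+2+k)) + θ))) := by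
          ring
        have h3 : E * B * 2^M * 2 ≤ Dr := by
          rw [hDrdef]
          have h2M : (0:ℝ) ≤ (2:ℝ)^M := by positivity
          have hEB2 : (0:ℝ) ≤ E * B * 2^M := mul_nonneg (mul_nonneg hE0 hB0) h2M
          have h7 : (2:ℝ) ≤ 2 + 1/lam := by
            have : (0:ℝ) < 1/lam := by positivity
            linarith
          exact mul_le_mul_of_nonneg_left h7 hEB2
        have h4 : (0:ℝ) ≤ (1/2:ℝ)^k * (1 / (-f (↑(n+2+k)) + θ)) ∨
            (1/2:ℝ)^k * (1 / (-f (↑(n+2+k)) + θ)) < 0 := le_or_gt _ _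
        rcases h4 with h4 | h4
        · calc 1 / P (n + 1) * (P (n + 2 + k) / lamn (n + 2 + k))
              ≤ E * (B * 2^M * (1/2)^k * (2 / (-f (↑(n+2+k)) + θ))) := h1
            _ = (E * B * 2^M * 2) * ((1/2)^k * (1 / (-f (↑(n+2+k)) + θ))) := h2
            _ ≤ Dr * ((1/2)^k * (1 / (-f (↑(n+2+k)) + θ))) :=
              mul_le_mul_of_nonneg_right h3 h4
        · -- then RHS of h1 is ≤ 0 but LHS ≥ 0; also target ≥ LHS... handle via nonneg LHS
          exfalso
          have hnn : (0:ℝ) ≤ 1 / P (n + 1) * (P (n + 2 + k) / lamn (n + 2 + k)) := by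
            have := hPpos (n+2+k) (by omega)
            have := hlam_pos (n+2+k) (by omega)
            positivity
          have hP' : (0:ℝ) < E * B * 2^M * 2 := by
            have h2M : (0:ℝ) < (2:ℝ)^M := by positivity
            have hEB : (0:ℝ) < E * B := by nlinarith
            nlinarith
          have hRHSneg : E * (B * 2^M * (1/2)^k * (2 / (-f (↑(n+2+k)) + θ))) < 0 := by
            rw [h2]
            exact mul_neg_of_pos_of_neg hP' h4
          linarith
      calc ENNReal.ofReal (1 / P (n + 1) * (P (n + 2 + k) / lamn (n + 2 + k)))
          ≤ ENNReal.ofReal (Dr * ((1/2:ℝ)^k * (1 / (-f (↑(n+2+k)) + θ)))) :=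
            ENNReal.ofReal_le_ofReal hreal
        _ = D * ENNReal.ofReal ((1/2:ℝ)^k) * ENNReal.ofReal (1 / (-f (↑(n+2+k)) + θ)) := by
            rw [ENNReal.ofReal_mul hDr_nonneg,
              ENNReal.ofReal_mul (by positivity : (0:ℝ) ≤ (1/2:ℝ)^k), ← mul_assoc]
        _ ≤ D * ENNReal.ofReal ((1/2:ℝ)^k) * g (n+k) := by
            refine mul_le_mul_right ?_ _
            rw [hgdef]
            simp only
            have hidx : ((n + k + 2 : ℕ):ℝ) = ((n + 2 + k : ℕ):ℝ) := by
              congr 1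
              omega
            rw [hidx]
            exact self_le_add_right _ _
  -- sum of g is finite
  have hGfin : (∑' j, g j) < ⊤ := by
    rw [hgdef]
    rw [ENNReal.tsum_add]
    refine ENNReal.add_lt_top.mpr ⟨?_, ?_⟩
    · -- ofReal part
      refine lt_of_le_of_lt (tsum_shift_le _ (M - 2)) ?_
      refine ENNReal.add_lt_top.mpr ⟨?_, ?_⟩
      · refine ENNReal.sum_lt_top.mpr fun j _ => ENNReal.ofReal_lt_top
      · have heq : ∀ j : ℕ, ENNReal.ofReal (1 / (-f ((j + (M-2) + 2 : ℕ):ℝ) + θ))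
            = ENNReal.ofReal (1 / (-f ((M + j : ℕ):ℝ) + θ)) := by
          intro j
          have hnat : j + (M - 2) + 2 = M + j := by omega
          rw [hnat]
        rw [tsum_congr heq]
        exact lt_of_le_of_lt hMtail hI
    · -- indicator part
      have hout : ∀ j ∉ Finset.range M, (if j + 2 < M then (1:ENNReal) else 0) = 0 := by
        intro j hj
        rw [Finset.mem_range, not_lt] at hj
        rw [if_neg (by omega)]
      rw [tsum_eq_sum hout]
      refine ENNReal.sum_lt_top.mpr fun j _ => ?_
      split <;> simp
  -- final computation
  have hstep1 : (∑' n : ℕ, ENNReal.ofReal (1 / P (n + 1)) *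
      ∑' k : ℕ, ENNReal.ofReal (P (n + 2 + k) / lamn (n + 2 + k)))
      = ∑' n : ℕ, ∑' k : ℕ, ENNReal.ofReal (1 / P (n + 1)) *
          ENNReal.ofReal (P (n + 2 + k) / lamn (n + 2 + k)) := by
    refine tsum_congr fun n => ?_
    exact ENNReal.tsum_mul_left.symm
  rw [hstep1]
  have hstep2 : (∑' n : ℕ, ∑' k : ℕ, ENNReal.ofReal (1 / P (n + 1)) *
      ENNReal.ofReal (P (n + 2 + k) / lamn (n + 2 + k)))
      ≤ ∑' n : ℕ, ∑' k : ℕ, D * ENNReal.ofReal ((1/2:ℝ)^k) * g (n+k) :=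
    Summable.tsum_le_tsum (fun n => Summable.tsum_le_tsum (fun k => hTerm n k)
      ENNReal.summable ENNReal.summable) ENNReal.summable ENNReal.summable
  refine lt_of_le_of_lt hstep2 ?_
  rw [ENNReal.tsum_comm]
  have hstep3 : (∑' k : ℕ, ∑' n : ℕ, D * ENNReal.ofReal ((1/2:ℝ)^k) * g (n+k))
      ≤ ∑' k : ℕ, D * ENNReal.ofReal ((1/2:ℝ)^k) * (∑' j, g j) := by
    refine Summable.tsum_le_tsum (fun k => ?_) ENNReal.summable ENNReal.summable
    rw [ENNReal.tsum_mul_left]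
    refine mul_le_mul_right ?_ _
    exact ENNReal.tsum_comp_le_tsum_of_injective (add_left_injective k) g
  refine lt_of_le_of_lt hstep3 ?_
  have hstep4 : (∑' k : ℕ, D * ENNReal.ofReal ((1/2:ℝ)^k) * (∑' j, g j))
      = (D * (∑' j, g j)) * ∑' k : ℕ, ENNReal.ofReal ((1/2:ℝ)^k) := by
    rw [← ENNReal.tsum_mul_left]
    refine tsum_congr fun k => ?_
    ring
  rw [hstep4, pow_half_tsum]
  refine ENNReal.mul_lt_top ?_ (by norm_num)
  exact ENNReal.mul_lt_top ENNReal.ofReal_lt_top hGfin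

/-- Under (H1), `λ, μ > 0`, `f x ≠ 0` for `x ≥ a₀`, if
`∫_{a₀}^∞ 1/|f x| dx < ∞` then `S = Σ_{n≥1} (1/π_n) Σ_{k≥n+1} π_k/λ_k < ∞`. -/
theorem stmt7 (f : ℝ → ℝ) (θ : ℝ) (hθ : 0 ≤ θ)
    (hf_cont : ContinuousOn f (Ici 0)) (hf0 : f 0 = 0)
    (hH1 : ∀ x ≥ (0:ℝ), ∀ y ≥ (0:ℝ), f (x + y) - f y ≤ θ * x)
    (lam mu : ℝ) (hlam : 0 < lam) (hmu : 0 < mu)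
    (a₀ : ℝ) (ha₀ : 0 < a₀) (hfne : ∀ x ≥ a₀, f x ≠ 0)
    (lamn mun : ℕ → ℝ)
    (hlamn : ∀ n : ℕ, lamn n = lam * n + ∑ ℓ ∈ Finset.Icc 1 n, max (f ℓ - f ((ℓ : ℝ) - 1)) 0)
    (hmun : ∀ n : ℕ, mun n = mu * n + ∑ ℓ ∈ Finset.Icc 1 n, max (-(f ℓ - f ((ℓ : ℝ) - 1))) 0)
    (P : ℕ → ℝ) (hP1 : P 1 = 1)
    (hPn : ∀ n : ℕ, 2 ≤ n →
      P n = (∏ i ∈ Finset.Icc 1 n, lamn i) / (∏ i ∈ Finset.Icc 2 n, mun i))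
    (hint : (∫⁻ x in Ici a₀, ENNReal.ofReal (1 / |f x|)) < ⊤) :
    (∑' n : ℕ, ENNReal.ofReal (1 / P (n + 1)) *
      ∑' k : ℕ, ENNReal.ofReal (P (n + 2 + k) / lamn (n + 2 + k))) < ⊤ := by
  set c := lam + θ with hcdef
  have hc : 0 < c := by positivity
  -- increments
  have hstep : ∀ s t : ℝ, 0 ≤ s → s ≤ t → f t - f s ≤ θ * (t - s) := by
    intro s t hs hst
    have := hH1 (t - s) (by linarith) s hs
    rw [sub_add_cancel] at this
    linarith [this]
  have hfle : ∀ x : ℝ, 0 ≤ x → f x ≤ θ * x := by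
    intro x hx
    have := hstep 0 x le_rfl hx
    rw [hf0] at this; linarith [this]
  -- telescoping
  have htel : ∀ n : ℕ, ∑ ℓ ∈ Finset.Icc 1 n, (f ℓ - f ((ℓ : ℝ) - 1)) = f n := by
    intro n
    have h1 : Finset.Icc 1 n = Finset.Ico 1 (n+1) := by rw [Finset.Ico_add_one_right_eq_Icc]
    rw [h1, Finset.sum_Ico_eq_sum_range]
    simp only [Nat.add_sub_cancel]
    have : ∀ i : ℕ, f (↑(1 + i)) - f ((↑(1+i) : ℝ) - 1) = f (↑(i+1)) - f (↑i) := by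
      intro i; push_cast; ring_nf
    rw [Finset.sum_congr rfl (fun i _ => this i), Finset.sum_range_sub (fun i => f ↑i) n]
    norm_num [hf0]
  have hterm_le : ∀ ℓ : ℕ, 1 ≤ ℓ → max (f ℓ - f ((ℓ : ℝ) - 1)) 0 ≤ θ := by
    intro ℓ hℓ
    have h1 : (0:ℝ) ≤ (ℓ:ℝ) - 1 := by
      have : (1:ℝ) ≤ (ℓ:ℝ) := by exact_mod_cast hℓ
      linarith
    have := hstep ((ℓ:ℝ) - 1) ℓ h1 (by linarith)
    refine max_le (by linarith [this]) hθ
  have hFp_nonneg : ∀ n : ℕ, 0 ≤ ∑ ℓ ∈ Finset.Icc 1 n, max (f ℓ - f ((ℓ : ℝ) - 1)) 0 :=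
    fun n => Finset.sum_nonneg fun ℓ _ => le_max_right _ _
  have hFp_le : ∀ n : ℕ, (∑ ℓ ∈ Finset.Icc 1 n, max (f ℓ - f ((ℓ : ℝ) - 1)) 0) ≤ θ * n := by
    intro n
    calc (∑ ℓ ∈ Finset.Icc 1 n, max (f ℓ - f ((ℓ : ℝ) - 1)) 0)
        ≤ ∑ ℓ ∈ Finset.Icc 1 n, θ := by
          refine Finset.sum_le_sum fun ℓ hℓ => hterm_le ℓ (Finset.mem_Icc.mp hℓ).1
      _ = θ * n := by
          rw [Finset.sum_const, Nat.card_Icc]; simp [mul_comm]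
  have hmun_eq : ∀ n : ℕ, mun n
      = mu * n + (∑ ℓ ∈ Finset.Icc 1 n, max (f ℓ - f ((ℓ : ℝ) - 1)) 0) - f n := by
    intro n
    rw [hmun n]
    have : ∀ ℓ : ℕ, max (-(f ℓ - f ((ℓ : ℝ) - 1))) 0
        = max (f ℓ - f ((ℓ : ℝ) - 1)) 0 - (f ℓ - f ((ℓ : ℝ) - 1)) := by
      intro ℓ
      rcases le_total (f ℓ - f ((ℓ : ℝ) - 1)) 0 with h | h
      · rw [max_eq_left (by linarith), max_eq_right h]; ring
      · rw [max_eq_right (by linarith), max_eq_left h]; ring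
    rw [Finset.sum_congr rfl (fun ℓ _ => this ℓ), Finset.sum_sub_distrib, htel n]
    ring
  have hlam_lb : ∀ n : ℕ, lam * n ≤ lamn n := by
    intro n; rw [hlamn n]; linarith [hFp_nonneg n]
  have hlam_ub : ∀ n : ℕ, lamn n ≤ c * n := by
    intro n; rw [hlamn n, hcdef]; have := hFp_le n; nlinarith [this]
  have hmu_lb : ∀ n : ℕ, mu * n ≤ mun n := by
    intro n; rw [hmun n]
    have : 0 ≤ ∑ ℓ ∈ Finset.Icc 1 n, max (-(f ℓ - f ((ℓ : ℝ) - 1))) 0 :=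
      Finset.sum_nonneg fun ℓ _ => le_max_right _ _
    linarith
  have hmun_ge : ∀ n : ℕ, mu * n + (- f n) ≤ mun n := by
    intro n; rw [hmun_eq n]; linarith [hFp_nonneg n]
  have hlam_pos : ∀ n : ℕ, 1 ≤ n → 0 < lamn n := by
    intro n hn
    have : (1:ℝ) ≤ (n:ℝ) := by exact_mod_cast hn
    calc (0:ℝ) < lam * n := by positivity
      _ ≤ lamn n := hlam_lb n
  have hmun_pos : ∀ n : ℕ, 1 ≤ n → 0 < mun n := by
    intro n hn
    have : (1:ℝ) ≤ (n:ℝ) := by exact_mod_cast hn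
    calc (0:ℝ) < mu * n := by positivity
      _ ≤ mun n := hmu_lb n
  have hIb := auxIb f a₀ ha₀ hf_cont
  have hneg := auxNeg f θ hθ a₀ ha₀ hf_cont hfne hfle hIb hint
  obtain ⟨M, hM2, hMa₀, hgood, hMtail⟩ := auxM f θ hθ a₀ ha₀ c hc hneg hstep hIb hint
  obtain ⟨hinvmun, hhalf, hcase1, hcase2⟩ := auxProd f θ lam mu c hθ hlam hmu hcdef
    lamn mun M hM2 hlam_pos hmun_pos hlam_lb hlam_ub hmun_ge hgood
  obtain ⟨hPprod, hPpos, hX⟩ := auxP lamn mun P hlam_pos hmun_pos hP1 hPn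
  have hB1 : (1:ℝ) ≤ ∏ i ∈ Finset.Ioc 1 M, max 1 (lamn i / mun i) := by
    have := Finset.prod_le_prod (s := Finset.Ioc 1 M) (f := fun _ => (1:ℝ))
      (g := fun i => max 1 (lamn i / mun i)) (fun i _ => by norm_num)
      (fun i _ => le_max_left _ _)
    rwa [Finset.prod_const_one] at this
  have hprod_nonneg : ∀ n k : ℕ,
      0 ≤ (∏ i ∈ Finset.Ioc (n+1) (n+2+k), (lamn i / mun i)) / lamn (n+2+k) := by
    intro n k
    have h1 : 0 ≤ ∏ i ∈ Finset.Ioc (n+1) (n+2+k), (lamn i / mun i) :=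
      Finset.prod_nonneg fun i hi => by
        rw [Finset.mem_Ioc] at hi
        exact le_of_lt (div_pos (hlam_pos i (by omega)) (hmun_pos i (by omega)))
    have h2 := hlam_pos (n+2+k) (by omega)
    positivity
  exact auxFinal f θ lam hθ hlam lamn mun P M hM2 hlam_pos hPpos hX hprod_nonneg
    hcase1 hcase2 hB1 _ hint hMtail
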